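/- Let M̂ be SPD of size n̂, B̂ of size k×n̂, Ŵ SPD of size k, and C of size m×n̂ of full row rank. Set Â = B̂ᵀ Ŵ⁻¹ B̂ + M̂. Then C Â⁻¹ Cᵀ = [C, 0] [M̂, B̂ᵀ; B̂, −Ŵ]⁻¹ [Cᵀ; 0], i.e., the hybridization Schur complement of the second-order form equals that of the mixed form. -/

import Mathlib

open Matrix

theorem hybridization_schur_second_order_eq_mixed
    (nh k m : ℕ)
    (M : Matrix (Fin nh) (Fin nh) ℝ) (B : Matrix (Fin k) (Fin nh) ℝ)
    (W : Matrix (Fin k) (Fin k) ℝ) (C : Matrix (Fin m) (Fin nh) ℝ)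
    (hM : M.PosDef) (hW : W.PosDef)
    (hC : LinearMap.range C.mulVecLin = ⊤)
    (A : Matrix (Fin nh) (Fin nh) ℝ)
    (hA : A = Bᵀ * W⁻¹ * B + M) :
    C * A⁻¹ * Cᵀ =
      (Matrix.fromCols C (0 : Matrix (Fin m) (Fin k) ℝ)) * (Matrix.fromBlocks M Bᵀ B (-W))⁻¹ *
        (Matrix.fromCols C (0 : Matrix (Fin m) (Fin k) ℝ))ᵀ := by
  have hApd : A.PosDef := by
    rw [hA]
    refine Matrix.PosDef.posSemidef_add ?_ hM
    simpa using hW.inv.posSemidef.conjTranspose_mul_mul_same B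
  letI : Invertible W := hW.isUnit.invertible
  letI : Invertible (-W) := invertibleNeg W
  have hS : M - Bᵀ * ⅟(-W) * B = A := by
    rw [hA, invOf_neg, invOf_eq_nonsing_inv]
    simp [Matrix.mul_neg, Matrix.neg_mul, sub_neg_eq_add, add_comm]
  letI : Invertible (M - Bᵀ * ⅟(-W) * B) := by
    rw [hS]; exact hApd.isUnit.invertible
  letI iK : Invertible (fromBlocks M Bᵀ B (-W)) :=
    Matrix.fromBlocks₂₂Invertible M Bᵀ B (-W)
  rw [← invOf_eq_nonsing_inv (fromBlocks M Bᵀ B (-W)),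
    Matrix.invOf_fromBlocks₂₂_eq, transpose_fromCols, fromCols_mul_fromBlocks,
    fromCols_mul_fromRows]
  rw [invOf_eq_nonsing_inv, hS]
  simp [Matrix.mul_assoc]
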